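/- Let d ≥ 1 and let s > -1/2 be a real number. Let U, V, Ũ, Ṽ be orthogonal d×d real matrices and let σ, σ̃ ∈ ℝ^d have nonnegative entries. Set A := U·diag(σ)·Vᵀ, C := Ũ·diag(σ̃)·Ṽᵀ, S_s(A) := U·diag(σ_1^{2s+1},…,σ_d^{2s+1})·Vᵀ and S_s(C) := Ũ·diag(σ̃_1^{2s+1},…,σ̃_d^{2s+1})·Ṽᵀ. Then (S_s(A) − S_s(C)) : (A − C) ≥ 0, i.e. the matrix function S_s(A) = (A Aᵀ)^s A is monotone with respect to the Frobenius inner product. -/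
import Mathlib


open Matrix BigOperators

lemma entry_svd {d : ℕ} (W X : Matrix (Fin d) (Fin d) ℝ) (γ : Fin d → ℝ) (a b : Fin d) :
    (W * Matrix.diagonal γ * Xᵀ) a b = ∑ i, W a i * γ i * X b i := by
  conv_lhs => rw [Matrix.mul_apply]
  simp [Matrix.mul_diagonal]

lemma sum4_comm {d : ℕ} (F : Fin d → Fin d → Fin d → Fin d → ℝ) :
    ∑ a, ∑ b, ∑ i, ∑ j, F a b i j = ∑ i, ∑ j, ∑ a, ∑ b, F a b i j := by
  calc ∑ a, ∑ b, ∑ i, ∑ j, F a b i j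
      = ∑ a, ∑ i, ∑ b, ∑ j, F a b i j :=
        Finset.sum_congr rfl fun a _ => Finset.sum_comm
    _ = ∑ i, ∑ a, ∑ b, ∑ j, F a b i j := Finset.sum_comm
    _ = ∑ i, ∑ a, ∑ j, ∑ b, F a b i j :=
        Finset.sum_congr rfl fun i _ => Finset.sum_congr rfl fun a _ => Finset.sum_comm
    _ = ∑ i, ∑ j, ∑ a, ∑ b, F a b i j :=
        Finset.sum_congr rfl fun i _ => Finset.sum_comm

lemma sum_entry_mul_svd {d : ℕ} (W X W' X' : Matrix (Fin d) (Fin d) ℝ) (α β : Fin d → ℝ) :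
    ∑ a, ∑ b, (W * Matrix.diagonal α * Xᵀ) a b * (W' * Matrix.diagonal β * X'ᵀ) a b
      = ∑ i, ∑ j, α i * β j * ((Wᵀ * W') i j * (Xᵀ * X') i j) := by
  simp only [entry_svd, Finset.sum_mul_sum]
  rw [sum4_comm]
  refine Finset.sum_congr rfl fun i _ => Finset.sum_congr rfl fun j _ => ?_
  simp only [Matrix.mul_apply, Matrix.transpose_apply, Finset.sum_mul_sum,
    Finset.mul_sum, Finset.sum_mul]
  rw [Finset.sum_comm]
  refine Finset.sum_congr rfl fun a _ => Finset.sum_congr rfl fun b _ => by ring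

lemma rearr_ineq (t a b : ℝ) (ha : 0 ≤ a) (hb : 0 ≤ b) (ht : 0 ≤ t) :
    a ^ t * b + a * b ^ t ≤ a ^ t * a + b ^ t * b := by
  rcases le_total a b with h | h
  · have h1 := Real.rpow_le_rpow ha h ht
    nlinarith
  · have h1 := Real.rpow_le_rpow hb h ht
    nlinarith

lemma term_bound (c Cb p q : ℝ) (hc : 0 ≤ c) (hcC : c ≤ Cb) :
    c * (p * q) ≤ Cb * ((p ^ 2 + q ^ 2) / 2) := by
  nlinarith [mul_nonneg hc (sq_nonneg (p - q)), sq_nonneg (p - q), sq_nonneg (p + q),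
    mul_le_mul_of_nonneg_right hcC (by positivity : (0:ℝ) ≤ (p ^ 2 + q ^ 2) / 2)]

/-- Monotonicity of the matrix function `S_s(A) = (A Aᵀ)^s A`, expressed via singular
value decompositions: `(S_s(A) − S_s(C)) : (A − C) ≥ 0` for the Frobenius inner product. -/
theorem monotone_Ss
    (d : ℕ) (hd : 1 ≤ d) (s : ℝ) (hs : -1/2 < s)
    (U V U' V' : Matrix (Fin d) (Fin d) ℝ)
    (hU : Uᵀ * U = 1) (hV : Vᵀ * V = 1) (hU' : U'ᵀ * U' = 1) (hV' : V'ᵀ * V' = 1)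
    (σ σ' : Fin d → ℝ) (hσ : ∀ j, 0 ≤ σ j) (hσ' : ∀ j, 0 ≤ σ' j)
    (A C SsA SsC : Matrix (Fin d) (Fin d) ℝ)
    (hA : A = U * Matrix.diagonal σ * Vᵀ)
    (hC : C = U' * Matrix.diagonal σ' * V'ᵀ)
    (hSsA : SsA = U * Matrix.diagonal (fun j => σ j ^ (2*s+1)) * Vᵀ)
    (hSsC : SsC = U' * Matrix.diagonal (fun j => σ' j ^ (2*s+1)) * V'ᵀ) :
    0 ≤ ∑ i, ∑ j, (SsA - SsC) i j * (A - C) i j := by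
  set t : ℝ := 2*s+1 with ht_def
  have ht : 0 ≤ t := by simp only [ht_def]; linarith
  set P : Matrix (Fin d) (Fin d) ℝ := Uᵀ * U' with hP_def
  set Q : Matrix (Fin d) (Fin d) ℝ := Vᵀ * V' with hQ_def
  have hUU : U * Uᵀ = 1 := mul_eq_one_comm.mp hU
  have hVV : V * Vᵀ = 1 := mul_eq_one_comm.mp hV
  have hUU' : U' * U'ᵀ = 1 := mul_eq_one_comm.mp hU'
  have hVV' : V' * V'ᵀ = 1 := mul_eq_one_comm.mp hV'
  have hPPt : P * Pᵀ = 1 := by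
    have : P * Pᵀ = Uᵀ * (U' * U'ᵀ) * U := by
      simp [hP_def, Matrix.transpose_mul, Matrix.mul_assoc]
    rw [this, hUU', Matrix.mul_one, hU]
  have hPtP : Pᵀ * P = 1 := mul_eq_one_comm.mp hPPt
  have hQQt : Q * Qᵀ = 1 := by
    have : Q * Qᵀ = Vᵀ * (V' * V'ᵀ) * V := by
      simp [hQ_def, Matrix.transpose_mul, Matrix.mul_assoc]
    rw [this, hVV', Matrix.mul_one, hV]
  have hQtQ : Qᵀ * Q = 1 := mul_eq_one_comm.mp hQQt
  have rowP : ∀ i, ∑ j, P i j ^ 2 = 1 := fun i => by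
    simpa [Matrix.mul_apply, Matrix.one_apply, sq] using congrArg (fun M => M i i) hPPt
  have rowQ : ∀ i, ∑ j, Q i j ^ 2 = 1 := fun i => by
    simpa [Matrix.mul_apply, Matrix.one_apply, sq] using congrArg (fun M => M i i) hQQt
  have colP : ∀ j, ∑ i, P i j ^ 2 = 1 := fun j => by
    simpa [Matrix.mul_apply, Matrix.one_apply, sq] using congrArg (fun M => M j j) hPtP
  have colQ : ∀ j, ∑ i, Q i j ^ 2 = 1 := fun j => by
    simpa [Matrix.mul_apply, Matrix.one_apply, sq] using congrArg (fun M => M j j) hQtQ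
  -- Expand the Frobenius inner product
  have expand : (∑ i, ∑ j, (SsA - SsC) i j * (A - C) i j)
      = ((∑ a, ∑ b, SsA a b * A a b) + (∑ a, ∑ b, SsC a b * C a b))
        - ((∑ a, ∑ b, SsA a b * C a b) + (∑ a, ∑ b, A a b * SsC a b)) := by
    simp only [Matrix.sub_apply, sub_mul, mul_sub, Finset.sum_sub_distrib,
      Finset.sum_add_distrib]
    have : ∀ a b : Fin d, SsC a b * A a b = A a b * SsC a b := fun a b => mul_comm _ _
    simp only [this]
    ring
  have e1 : (∑ a, ∑ b, SsA a b * A a b) = ∑ i, σ i ^ t * σ i := by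
    rw [hSsA, hA, sum_entry_mul_svd, hU, hV]
    simp [Matrix.one_apply]
  have e2 : (∑ a, ∑ b, SsC a b * C a b) = ∑ j, σ' j ^ t * σ' j := by
    rw [hSsC, hC, sum_entry_mul_svd, hU', hV']
    simp [Matrix.one_apply]
  have e3 : (∑ a, ∑ b, SsA a b * C a b)
      = ∑ i, ∑ j, σ i ^ t * σ' j * (P i j * Q i j) := by
    rw [hSsA, hC, sum_entry_mul_svd]
  have e4 : (∑ a, ∑ b, A a b * SsC a b)
      = ∑ i, ∑ j, σ i * σ' j ^ t * (P i j * Q i j) := by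
    rw [hA, hSsC, sum_entry_mul_svd]
  have hsum34 : (∑ i, ∑ j, σ i ^ t * σ' j * (P i j * Q i j))
        + (∑ i, ∑ j, σ i * σ' j ^ t * (P i j * Q i j))
      = ∑ i, ∑ j, (σ i ^ t * σ' j + σ i * σ' j ^ t) * (P i j * Q i j) := by
    rw [← Finset.sum_add_distrib]
    refine Finset.sum_congr rfl fun i _ => ?_
    rw [← Finset.sum_add_distrib]
    refine Finset.sum_congr rfl fun j _ => by ring
  -- The key bound
  have hbound : (∑ i, ∑ j, (σ i ^ t * σ' j + σ i * σ' j ^ t) * (P i j * Q i j))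
      ≤ (∑ i, σ i ^ t * σ i) + (∑ j, σ' j ^ t * σ' j) := by
    have step1 : (∑ i, ∑ j, (σ i ^ t * σ' j + σ i * σ' j ^ t) * (P i j * Q i j))
        ≤ ∑ i, ∑ j, (σ i ^ t * σ i + σ' j ^ t * σ' j) * ((P i j ^ 2 + Q i j ^ 2) / 2) := by
      refine Finset.sum_le_sum fun i _ => Finset.sum_le_sum fun j _ => ?_
      refine term_bound _ _ _ _ ?_ ?_
      · have h1 : 0 ≤ σ i ^ t := Real.rpow_nonneg (hσ i) t
        have h2 : 0 ≤ σ' j ^ t := Real.rpow_nonneg (hσ' j) t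
        have := hσ i; have := hσ' j
        positivity
      · exact rearr_ineq t (σ i) (σ' j) (hσ i) (hσ' j) ht
    have step2 : (∑ i, ∑ j, (σ i ^ t * σ i + σ' j ^ t * σ' j) * ((P i j ^ 2 + Q i j ^ 2) / 2))
        = (∑ i, σ i ^ t * σ i) + (∑ j, σ' j ^ t * σ' j) := by
      have split : (∑ i, ∑ j, (σ i ^ t * σ i + σ' j ^ t * σ' j) * ((P i j ^ 2 + Q i j ^ 2) / 2))
          = (∑ i, ∑ j, (σ i ^ t * σ i) * ((P i j ^ 2 + Q i j ^ 2) / 2))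
            + (∑ i, ∑ j, (σ' j ^ t * σ' j) * ((P i j ^ 2 + Q i j ^ 2) / 2)) := by
        simp only [add_mul, Finset.sum_add_distrib]
      rw [split]
      have part1 : (∑ i, ∑ j, (σ i ^ t * σ i) * ((P i j ^ 2 + Q i j ^ 2) / 2))
          = ∑ i, σ i ^ t * σ i := by
        refine Finset.sum_congr rfl fun i _ => ?_
        rw [← Finset.mul_sum]
        have : (∑ j, (P i j ^ 2 + Q i j ^ 2) / 2) = 1 := by
          rw [← Finset.sum_div, Finset.sum_add_distrib, rowP i, rowQ i]
          norm_num
        rw [this, mul_one]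
      have part2 : (∑ i, ∑ j, (σ' j ^ t * σ' j) * ((P i j ^ 2 + Q i j ^ 2) / 2))
          = ∑ j, σ' j ^ t * σ' j := by
        rw [Finset.sum_comm]
        refine Finset.sum_congr rfl fun j _ => ?_
        rw [← Finset.mul_sum]
        have : (∑ i, (P i j ^ 2 + Q i j ^ 2) / 2) = 1 := by
          rw [← Finset.sum_div, Finset.sum_add_distrib, colP j, colQ j]
          norm_num
        rw [this, mul_one]
      rw [part1, part2]
    linarith
  rw [expand, e1, e2, e3, e4, hsum34]
  linarith
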